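/- For every real number a with 0 < a ≤ 1, one has ∫₀¹ r·log(1/r)/(r + a)² dr ≤ 1 + log(1/a) + (1/2)·log²(1/a). -/

import Mathlib

open MeasureTheory Set intervalIntegral

lemma aux1 (a : ℝ) (ha : 0 < a) :
    ∫ x in (0:ℝ)..a, x * Real.log x = a^2/2 * Real.log a - a^2/4 := by
  have h : ∀ x ∈ Set.uIcc (0:ℝ) a,
      HasDerivAt (fun x : ℝ => x^2/2 * Real.log x - x^2/4) (x * Real.log x) x := by
    intro x hx
    rcases eq_or_ne x 0 with rfl | hx0
    · rw [hasDerivAt_iff_tendsto_slope, zero_mul]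
      have heq : ∀ y : ℝ, y ≠ 0 → slope (fun x : ℝ => x^2/2 * Real.log x - x^2/4) 0 y
          = y * Real.log y / 2 - y/4 := by
        intro y hy
        simp [slope, hy]
        field_simp
      have h2 : Filter.Tendsto (fun y : ℝ => y * Real.log y / 2 - y/4) (nhdsWithin 0 {(0:ℝ)}ᶜ)
          (nhds 0) := by
        have h3 : Filter.Tendsto (fun y : ℝ => y * Real.log y / 2 - y/4) (nhds 0) (nhds 0) := by
          have := (((Real.continuous_mul_log.tendsto 0).div_const 2).sub
            ((continuous_id.tendsto (0:ℝ)).div_const 4))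
          simpa using this
        exact h3.mono_left nhdsWithin_le_nhds
      refine h2.congr' ?_
      filter_upwards [self_mem_nhdsWithin] with y hy
      exact (heq y hy).symm
    · have h1 : HasDerivAt (fun x : ℝ => x^2/2 * Real.log x) (x * Real.log x + x/2) x := by
        have := (HasDerivAt.mul (by simpa using ((hasDerivAt_pow 2 x).div_const 2))
          (Real.hasDerivAt_log hx0))
        refine this.congr_deriv ?_
        field_simp
      have h2 : HasDerivAt (fun x : ℝ => x^2/4) (x/2) x := by
        have := (hasDerivAt_pow 2 x).div_const 4
        refine this.congr_deriv ?_
        push_cast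
        ring
      exact (h1.sub h2).congr_deriv (by ring)
  rw [integral_eq_sub_of_hasDerivAt h (Real.continuous_mul_log.intervalIntegrable 0 a)]
  simp

lemma aux2 (a : ℝ) (ha : 0 < a) :
    ∫ x in a..(1:ℝ), Real.log x / x = -(Real.log a)^2/2 := by
  have hne : ∀ x ∈ Set.uIcc a (1:ℝ), x ≠ 0 := by
    intro x hx
    rcases Set.mem_uIcc.1 hx with h | h
    · exact (lt_of_lt_of_le ha h.1).ne'
    · exact (lt_of_lt_of_le one_pos h.1).ne'
  have h : ∀ x ∈ Set.uIcc a (1:ℝ),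
      HasDerivAt (fun x : ℝ => (Real.log x)^2/2) (Real.log x / x) x := by
    intro x hx
    have hx0 : x ≠ 0 := hne x hx
    have := ((Real.hasDerivAt_log hx0).pow 2).div_const 2
    refine this.congr_deriv ?_
    field_simp
    ring
  have hcont : IntervalIntegrable (fun x : ℝ => Real.log x / x) volume a 1 := by
    apply ContinuousOn.intervalIntegrable
    exact ContinuousOn.div (Real.continuousOn_log.mono hne) continuousOn_id hne
  rw [integral_eq_sub_of_hasDerivAt h hcont, Real.log_one]
  ring

theorem integral_mul_log_div_sq_le (a : ℝ) (ha0 : 0 < a) (ha1 : a ≤ 1) :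
    ∫ r in Set.Ioo (0 : ℝ) 1, r * Real.log (1 / r) / (r + a) ^ 2 ≤
      1 + Real.log (1 / a) + (1 / 2) * (Real.log (1 / a)) ^ 2 := by
  have hsplit : Set.Ioo (0:ℝ) a ∪ Set.Ico a 1 = Set.Ioo (0:ℝ) 1 := by
    rcases eq_or_lt_of_le ha1 with rfl | h
    · simp
    · exact Set.Ioo_union_Ico_eq_Ioo ha0 ha1
  have hfeq : ∀ r : ℝ, r * Real.log (1/r) / (r + a)^2 = -(r * Real.log r)/(r+a)^2 := by
    intro r; rw [one_div, Real.log_inv]; ring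
  have hfc : ContinuousOn (fun r : ℝ => r * Real.log (1/r) / (r + a)^2) (Set.Icc 0 1) := by
    have hc : ContinuousOn (fun r : ℝ => -(r * Real.log r)/(r+a)^2) (Set.Icc 0 1) := by
      apply ContinuousOn.div
      · exact (Real.continuous_mul_log.neg).continuousOn
      · fun_prop
      · intro x hx
        have : 0 < x + a := by linarith [hx.1]
        positivity
    exact hc.congr (fun x _ => hfeq x)
  have hint : IntegrableOn (fun r : ℝ => r * Real.log (1/r) / (r + a)^2) (Set.Icc 0 1) :=
    hfc.integrableOn_Icc
  have hint1 : IntegrableOn (fun r : ℝ => r * Real.log (1/r) / (r + a)^2) (Set.Ioo 0 a) :=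
    hint.mono_set (fun x hx => ⟨hx.1.le, le_trans hx.2.le ha1⟩)
  have hint2 : IntegrableOn (fun r : ℝ => r * Real.log (1/r) / (r + a)^2) (Set.Ico a 1) :=
    hint.mono_set (fun x hx => ⟨le_trans ha0.le hx.1, hx.2.le⟩)
  have hg1c : Continuous (fun r : ℝ => -(r * Real.log r)/a^2) :=
    Real.continuous_mul_log.neg.div_const _
  have hg1int : IntegrableOn (fun r : ℝ => -(r * Real.log r)/a^2) (Set.Ioo 0 a) :=
    (hg1c.integrableOn_Icc).mono_set Set.Ioo_subset_Icc_self
  have hg2int : IntegrableOn (fun r : ℝ => Real.log (1/r)/r) (Set.Ico a 1) := by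
    have hne : ∀ x ∈ Set.Icc a (1:ℝ), x ≠ 0 := fun x hx => (lt_of_lt_of_le ha0 hx.1).ne'
    have hc : ContinuousOn (fun r : ℝ => -(Real.log r)/r) (Set.Icc a 1) :=
      ContinuousOn.div (Real.continuousOn_log.mono hne).neg continuousOn_id hne
    have hc2 : ContinuousOn (fun r : ℝ => Real.log (1/r)/r) (Set.Icc a 1) := by
      apply hc.congr
      intro x _
      show Real.log (1/x)/x = -Real.log x / x
      rw [one_div, Real.log_inv]
    exact hc2.integrableOn_Icc.mono_set Set.Ico_subset_Icc_self
  have hb1 : ∫ r in Set.Ioo (0:ℝ) a, r * Real.log (1/r) / (r + a)^2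
      ≤ ∫ r in Set.Ioo (0:ℝ) a, -(r * Real.log r)/a^2 := by
    apply setIntegral_mono_on hint1 hg1int measurableSet_Ioo
    intro r hr
    rw [hfeq r]
    have h1 : 0 ≤ -(r * Real.log r) := by
      have := Real.mul_log_nonpos hr.1.le (le_trans hr.2.le ha1)
      linarith
    have ha2 : a^2 ≤ (r+a)^2 := by nlinarith [hr.1.le]
    exact div_le_div_of_nonneg_left h1 (by positivity) ha2
  have hb2 : ∫ r in Set.Ico a (1:ℝ), r * Real.log (1/r) / (r + a)^2
      ≤ ∫ r in Set.Ico a (1:ℝ), Real.log (1/r)/r := by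
    apply setIntegral_mono_on hint2 hg2int measurableSet_Ico
    intro r hr
    have hr0 : 0 < r := lt_of_lt_of_le ha0 hr.1
    have key : Real.log (1/r)/r = r * Real.log (1/r) / r^2 := by
      field_simp
    rw [key]
    have hL : 0 ≤ Real.log (1/r) := Real.log_nonneg (by
      rw [le_div_iff₀ hr0]; linarith [hr.2.le])
    have hr2 : r^2 ≤ (r+a)^2 := by nlinarith
    exact div_le_div_of_nonneg_left (mul_nonneg hr0.le hL) (by positivity) hr2
  have hv1 : ∫ r in Set.Ioo (0:ℝ) a, -(r * Real.log r)/a^2 = 1/4 - Real.log a / 2 := by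
    rw [← integral_Ioc_eq_integral_Ioo, ← intervalIntegral.integral_of_le ha0.le]
    have heq : ∀ x : ℝ, -(x * Real.log x)/a^2 = -(x * Real.log x /a^2) := fun x => by ring
    simp_rw [heq]
    rw [intervalIntegral.integral_neg, intervalIntegral.integral_div, aux1 a ha0]
    field_simp
    ring
  have hv2 : ∫ r in Set.Ico a (1:ℝ), Real.log (1/r)/r = (Real.log a)^2/2 := by
    rw [integral_Ico_eq_integral_Ioo, ← integral_Ioc_eq_integral_Ioo,
      ← intervalIntegral.integral_of_le ha1]
    have heq : ∀ x : ℝ, Real.log (1/x)/x = -(Real.log x / x) := fun x => by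
      rw [one_div, Real.log_inv]; ring
    simp_rw [heq]
    rw [intervalIntegral.integral_neg, aux2 a ha0]
    ring
  rw [← hsplit, setIntegral_union ?hdisj measurableSet_Ico hint1 hint2]
  case hdisj =>
    rw [Set.disjoint_left]
    intro x hx hx'
    exact absurd hx.2 (not_lt.2 hx'.1)
  have hL : Real.log a ≤ 0 := Real.log_nonpos ha0.le ha1
  have hrhs : Real.log (1/a) = -Real.log a := by rw [one_div, Real.log_inv]
  rw [hrhs]
  nlinarith [hb1, hb2, hv1, hv2]
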